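/- In dimension d = 1, let (R, B) be an affine iterated function system with R an integer, R > 1, B ⊂ ℤ finite with #B = N, with invariant measure μ_B, and suppose the IFS has no overlap. If ν is a Bessel measure for μ_B, then the Beurling dimension of ν satisfies dim ν ≤ log N / log R. -/

import Mathlib

open MeasureTheory Filter Metric Complex Set
open scoped ENNReal NNReal Real Topology

noncomputable section

/-- The Fourier transform of the measure `f dμ` on `ℝ`:
`(f dμ)^(t) = ∫ f(x) e^{-2πi t x} dμ(x)`. -/
def ftm1 (μ : Measure ℝ) (f : ℝ → ℂ) (t : ℝ) : ℂ :=
  ∫ x, f x * Complex.exp (-(2 * Real.pi * t * x) * Complex.I) ∂μ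

/-- `ν` is a Bessel measure for `μ` with bound `B`. -/
def IsBesselBound1 (μ ν : Measure ℝ) (B : ℝ) : Prop :=
  ∀ f : ℝ → ℂ, MemLp f 2 μ →
    ∫⁻ t, (‖ftm1 μ f t‖₊ : ℝ≥0∞) ^ 2 ∂ν ≤ ENNReal.ofReal B * ∫⁻ x, (‖f x‖₊ : ℝ≥0∞) ^ 2 ∂μ

/-- `ν` is a frame measure for `μ` with bounds `A, B`. -/
def IsFrameBounds1 (μ ν : Measure ℝ) (A B : ℝ) : Prop :=
  ∀ f : ℝ → ℂ, MemLp f 2 μ →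
    ENNReal.ofReal A * ∫⁻ x, (‖f x‖₊ : ℝ≥0∞) ^ 2 ∂μ ≤ ∫⁻ t, (‖ftm1 μ f t‖₊ : ℝ≥0∞) ^ 2 ∂ν ∧
    ∫⁻ t, (‖ftm1 μ f t‖₊ : ℝ≥0∞) ^ 2 ∂ν ≤ ENNReal.ofReal B * ∫⁻ x, (‖f x‖₊ : ℝ≥0∞) ^ 2 ∂μ

/-- The interval `x + R·Q` where `Q = [0,1)`. -/
def cube1 (x R : ℝ) : Set ℝ := Set.Ico x (x + R)

/-- The `α`-upper Beurling density on `ℝ`. -/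
def beurlingDensity1 (ν : Measure ℝ) (α : ℝ) : ℝ≥0∞ :=
  limsup (fun R : ℝ => ⨆ x : ℝ, ν (cube1 x R) / ENNReal.ofReal (R ^ α)) atTop

/-- The upper Beurling dimension on `ℝ`. -/
def beurlingDim1 (ν : Measure ℝ) : ℝ≥0∞ :=
  ⨆ (α : ℝ) (_ : 0 ≤ α) (_ : beurlingDensity1 ν α = ∞), ENNReal.ofReal α

/-- The lower Beurling density on `ℝ`: `D⁻(ν) = liminf_{R→∞} inf_x ν(x+RQ)/R`. -/
def lowerBeurlingDensity1 (ν : Measure ℝ) : ℝ≥0∞ :=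
  liminf (fun R : ℝ => ⨅ x : ℝ, ν (cube1 x R) / ENNReal.ofReal R) atTop




private lemma measEq
    (R : ℕ) (hR : 1 < R) (B : Finset ℤ) (hBne : B.Nonempty)
    (X : Set ℝ) (hXc : IsCompact X)
    (hXsub : ∀ b ∈ B, ∀ x ∈ X, (x + (b : ℝ)) / (R : ℝ) ∈ X)
    (μB : Measure ℝ) [IsProbabilityMeasure μB]
    (hinv : ∀ f : ℝ → ℝ, Continuous f → HasCompactSupport f →
      ∫ x, f x ∂μB = (1 / (B.card : ℝ)) * ∑ b ∈ B, ∫ x, f ((x + (b : ℝ)) / (R : ℝ)) ∂μB)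
    (hsuppX : μB Xᶜ = 0) :
    μB = (B.card : ℝ≥0∞)⁻¹ • ∑ b ∈ B, Measure.map (fun x => (x + (b : ℝ)) / (R : ℝ)) μB := by
  have hNpos : 0 < B.card := Finset.card_pos.2 hBne
  have hNR : (0:ℝ) < B.card := by exact_mod_cast hNpos
  have haeX : ∀ᵐ x ∂μB, x ∈ X := by
    rw [ae_iff]
    simpa [Set.compl_def] using hsuppX
  have Tcont : ∀ b : ℤ, Continuous (fun x : ℝ => (x + (b : ℝ)) / (R : ℝ)) := by
    intro b; fun_prop
  apply ext_of_forall_lintegral_eq_of_IsFiniteMeasure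
  intro f
  obtain ⟨ψ, hψ1, -, hψc, hψmem⟩ :=
    exists_continuous_one_zero_of_isCompact hXc isClosed_empty (Set.disjoint_empty X)
  set g : ℝ → ℝ := fun x => (f x : ℝ) * ψ x with hg
  have gcont : Continuous g := by
    have : Continuous (fun x => (f x : ℝ)) := NNReal.continuous_coe.comp f.continuous
    exact this.mul ψ.continuous
  have gsupp : HasCompactSupport g := HasCompactSupport.mul_left hψc
  have hfint : Integrable (fun x => (f x : ℝ)) μB := by
    refine ⟨(NNReal.continuous_coe.comp f.continuous).aestronglyMeasurable, ?_⟩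
    rw [HasFiniteIntegral]
    simpa using f.lintegral_lt_top_of_nnreal μB
  have hfTint : ∀ b : ℤ, Integrable (fun x => (f ((x + (b : ℝ)) / (R : ℝ)) : ℝ)) μB := by
    intro b
    refine ⟨(NNReal.continuous_coe.comp (f.continuous.comp (Tcont b))).aestronglyMeasurable, ?_⟩
    rw [HasFiniteIntegral]
    have : ∫⁻ x, ‖(f ((x + (b : ℝ)) / (R : ℝ)) : ℝ)‖ₑ ∂μB
        = ∫⁻ y, ((f y : ℝ≥0) : ℝ≥0∞) ∂(Measure.map (fun x => (x + (b : ℝ)) / (R : ℝ)) μB) := by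
      rw [lintegral_map (by fun_prop) (Tcont b).measurable]
      simp
    rw [this]
    exact f.lintegral_lt_top_of_nnreal _
  have e1 := hinv g gcont gsupp
  have eg : ∫ x, g x ∂μB = ∫ x, (f x : ℝ) ∂μB := by
    refine integral_congr_ae (haeX.mono fun x hx => ?_)
    simp [hg, hψ1 hx]
  have egb : ∀ b ∈ B, ∫ x, g ((x + (b : ℝ)) / (R : ℝ)) ∂μB
      = ∫ x, (f ((x + (b : ℝ)) / (R : ℝ)) : ℝ) ∂μB := by
    intro b hb
    refine integral_congr_ae (haeX.mono fun x hx => ?_)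
    have hmem : (x + (b : ℝ)) / (R : ℝ) ∈ X := hXsub b hb x hx
    simp [hg, hψ1 hmem]
  rw [eg, Finset.sum_congr rfl egb] at e1
  -- now compute lintegrals
  have lhs : ∫⁻ x, ((f x : ℝ≥0) : ℝ≥0∞) ∂μB = ENNReal.ofReal (∫ x, (f x : ℝ) ∂μB) :=
    lintegral_coe_eq_integral f hfint
  have rhs : ∫⁻ x, ((f x : ℝ≥0) : ℝ≥0∞)
        ∂((B.card : ℝ≥0∞)⁻¹ • ∑ b ∈ B, Measure.map (fun x => (x + (b : ℝ)) / (R : ℝ)) μB)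
      = (B.card : ℝ≥0∞)⁻¹ * ∑ b ∈ B, ENNReal.ofReal (∫ x, (f ((x + (b : ℝ)) / (R : ℝ)) : ℝ) ∂μB) := by
    rw [lintegral_smul_measure, lintegral_finset_sum_measure]
    congr 1
    refine Finset.sum_congr rfl fun b hb => ?_
    rw [lintegral_map (by fun_prop) (Tcont b).measurable]
    exact lintegral_coe_eq_integral (fun x => f ((x + (b : ℝ)) / (R : ℝ))) (hfTint b)
  rw [lhs, rhs, e1, ENNReal.ofReal_mul (by positivity)]
  congr 1
  · rw [one_div, ENNReal.ofReal_inv_of_pos hNR]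
    norm_num
  · exact ENNReal.ofReal_sum_of_nonneg (fun b _ => integral_nonneg fun x => (f _).2)



private lemma keyTransfer
    (R : ℕ) (hR : 1 < R) (B : Finset ℤ)
    (X : Set ℝ) (hXc : IsCompact X)
    (hXsub : ∀ b ∈ B, ∀ x ∈ X, (x + (b : ℝ)) / (R : ℝ) ∈ X)
    (μB : Measure ℝ) [IsProbabilityMeasure μB]
    (hmeq : μB = (B.card : ℝ≥0∞)⁻¹ •
      ∑ b ∈ B, Measure.map (fun x => (x + (b : ℝ)) / (R : ℝ)) μB)
    (hsuppX : μB Xᶜ = 0)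
    (hno : ∀ b ∈ B, ∀ b' ∈ B, b ≠ b' →
      μB (((fun x => (x + (b : ℝ)) / (R : ℝ)) '' X) ∩
         ((fun x => (x + (b' : ℝ)) / (R : ℝ)) '' X)) = 0)
    (b0 : ℤ) (hb0 : b0 ∈ B) :
    ∀ (n : ℕ) (g : ℝ → ℂ), Continuous g → (∀ x, ‖g x‖ ≤ 1) →
      ∫ x, ((fun x => (x + (b0 : ℝ)) / (R : ℝ))^[n] '' X).indicator g x ∂μB
        = ((B.card : ℝ)⁻¹) ^ n * ∫ x, g ((fun x => (x + (b0 : ℝ)) / (R : ℝ))^[n] x) ∂μB := by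
  have hRR : (1:ℝ) < R := by exact_mod_cast hR
  have hR0 : (R:ℝ) ≠ 0 := by positivity
  set T : ℝ → ℝ := fun x => (x + (b0 : ℝ)) / (R : ℝ) with hT
  have Tcont : ∀ b : ℤ, Continuous (fun x : ℝ => (x + (b : ℝ)) / (R : ℝ)) := by
    intro b; fun_prop
  have Tinj : Function.Injective T := by
    intro x y hxy
    simp only [hT] at hxy
    field_simp at hxy
    linarith
  have haeX : ∀ᵐ x ∂μB, x ∈ X := by
    rw [ae_iff]; simpa [Set.compl_def] using hsuppX
  have hNpos : 0 < B.card := Finset.card_pos.2 ⟨b0, hb0⟩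
  have maple : ∀ b ∈ B, Measure.map (fun x => (x + (b : ℝ)) / (R : ℝ)) μB
      ≤ (B.card : ℝ≥0∞) • μB := by
    intro b hb
    have : (B.card : ℝ≥0∞) • μB
        = ∑ b ∈ B, Measure.map (fun x => (x + (b : ℝ)) / (R : ℝ)) μB := by
      rw [hmeq, smul_smul, ENNReal.mul_inv_cancel (by exact_mod_cast hNpos.ne')
        (by simp), one_smul]
      rw [← hmeq]
    rw [this]
    refine Measure.le_iff.2 fun s hs => ?_
    rw [Measure.finset_sum_apply]
    exact Finset.single_le_sum
      (f := fun b : ℤ => (Measure.map (fun x : ℝ => (x + (b : ℝ)) / (R : ℝ)) μB) s)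
      (s := B) (fun i _ => zero_le) (a := b) hb
  have hSX : ∀ n : ℕ, T^[n] '' X ⊆ X := by
    intro n
    induction n with
    | zero => simp
    | succ n ih =>
      rw [Function.iterate_succ', Set.image_comp]
      intro y hy
      obtain ⟨z, hz, rfl⟩ := hy
      exact hXsub b0 hb0 z (ih hz)
  have hScomp : ∀ n : ℕ, IsCompact (T^[n] '' X) := by
    intro n
    induction n with
    | zero => simpa using hXc
    | succ n ih =>
      rw [Function.iterate_succ', Set.image_comp]
      exact ih.image (Tcont b0)
  intro n
  induction n with
  | zero =>
    intro g hg hgb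
    simp only [Function.iterate_zero, id_eq, pow_zero, one_mul, Set.image_id']
    refine integral_congr_ae (haeX.mono fun x hx => ?_)
    exact Set.indicator_of_mem hx g
  | succ n ih =>
    intro g hg hgb
    have hSim : T^[n+1] '' X = T '' (T^[n] '' X) := by
      rw [Function.iterate_succ', Set.image_comp]
    set Sn : Set ℝ := T^[n] '' X with hSn
    have hSnMeas : MeasurableSet (T '' Sn) :=
      (((hScomp n).image (Tcont b0)).isClosed).measurableSet
    set F : ℝ → ℂ := (T '' Sn).indicator g with hF
    have hFmeas : StronglyMeasurable F :=
      hg.stronglyMeasurable.indicator hSnMeas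
    have hFbd : ∀ x, ‖F x‖ ≤ 1 := by
      intro x
      refine le_trans (norm_indicator_le_norm_self g x) (hgb x)
    have hint : ∀ b ∈ B, Integrable F (Measure.map (fun x => (x + (b : ℝ)) / (R : ℝ)) μB) := by
      intro b hb
      haveI : IsProbabilityMeasure (Measure.map (fun x => (x + (b : ℝ)) / (R : ℝ)) μB) :=
        Measure.isProbabilityMeasure_map (Tcont b).measurable.aemeasurable
      exact (integrable_const (1:ℝ)).mono' hFmeas.aestronglyMeasurable
        (Filter.Eventually.of_forall hFbd)
    have step1 : ∫ x, F x ∂μB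
        = ((((B.card : ℝ≥0∞)⁻¹).toReal : ℝ) : ℂ) *
          ∑ b ∈ B, ∫ x, F ((x + (b : ℝ)) / (R : ℝ)) ∂μB := by
      conv_lhs => rw [hmeq]
      rw [integral_smul_measure, integral_finset_sum_measure hint, Complex.real_smul]
      congr 1
      refine Finset.sum_congr rfl fun b hb => ?_
      exact integral_map (Tcont b).measurable.aemeasurable
        (hFmeas.aestronglyMeasurable)
    have hzero : ∀ b ∈ B, b ≠ b0 → ∫ x, F ((x + (b : ℝ)) / (R : ℝ)) ∂μB = 0 := by
      intro b hb hbne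
      set Z : Set ℝ := ((fun x => (x + (b : ℝ)) / (R : ℝ)) '' X) ∩ (T '' X) with hZ
      have hZ0 : μB Z = 0 := hno b hb b0 hb0 hbne
      have hZmeas : MeasurableSet Z :=
        ((hXc.image (Tcont b)).isClosed.measurableSet).inter
          ((hXc.image (Tcont b0)).isClosed.measurableSet)
      have hpre : μB ((fun x => (x + (b : ℝ)) / (R : ℝ)) ⁻¹' Z) = 0 := by
        have h1 : (Measure.map (fun x => (x + (b : ℝ)) / (R : ℝ)) μB) Z
            ≤ ((B.card : ℝ≥0∞) • μB) Z := Measure.le_iff'.1 (maple b hb) Z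
        rw [Measure.map_apply (Tcont b).measurable hZmeas] at h1
        simp only [Measure.smul_apply, smul_eq_mul, hZ0, mul_zero] at h1
        exact le_antisymm h1 zero_le
      have hae2 : ∀ᵐ x ∂μB, x ∉ (fun x => (x + (b : ℝ)) / (R : ℝ)) ⁻¹' Z :=
        measure_eq_zero_iff_ae_notMem.mp hpre
      refine integral_eq_zero_of_ae ((haeX.and hae2).mono fun x ⟨hx, hnx⟩ => ?_)
      refine Set.indicator_of_notMem (fun hmem => hnx ?_) g
      refine ⟨⟨x, hx, rfl⟩, ?_⟩
      have : T '' Sn ⊆ T '' X := Set.image_mono (hSX n)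
      exact this hmem
    have hb0term : ∫ x, F ((x + (b0 : ℝ)) / (R : ℝ)) ∂μB
        = ((B.card : ℝ)⁻¹) ^ n * ∫ x, g (T^[n+1] x) ∂μB := by
      have e : ∀ x, F (T x) = Sn.indicator (g ∘ T) x := by
        intro x
        exact Set.indicator_image Tinj
      calc ∫ x, F ((x + (b0 : ℝ)) / (R : ℝ)) ∂μB
          = ∫ x, Sn.indicator (g ∘ T) x ∂μB := by
            refine integral_congr_ae (Filter.Eventually.of_forall fun x => ?_)
            exact e x
        _ = ((B.card : ℝ)⁻¹) ^ n * ∫ x, (g ∘ T) (T^[n] x) ∂μB :=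
            ih (g ∘ T) (hg.comp (Tcont b0)) (fun x => hgb (T x))
        _ = ((B.card : ℝ)⁻¹) ^ n * ∫ x, g (T^[n+1] x) ∂μB := by
            congr 1
            refine integral_congr_ae (Filter.Eventually.of_forall fun x => ?_)
            simp [Function.comp, Function.iterate_succ_apply']
    have hsum : ∑ b ∈ B, ∫ x, F ((x + (b : ℝ)) / (R : ℝ)) ∂μB
        = ((B.card : ℝ)⁻¹) ^ n * ∫ x, g (T^[n+1] x) ∂μB := by
      rw [Finset.sum_eq_single_of_mem b0 hb0 (fun b hb hbne => hzero b hb hbne)]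
      exact hb0term
    have : ∫ x, (T^[n+1] '' X).indicator g x ∂μB = ∫ x, F x ∂μB := by
      rw [hSim]
    rw [this, step1, hsum]
    have htr : ((B.card : ℝ≥0∞)⁻¹).toReal = (B.card : ℝ)⁻¹ := by simp
    rw [htr]
    push_cast
    ring
private lemma normExpI (r : ℝ) : ‖Complex.exp ((r : ℂ) * Complex.I)‖ = 1 := by
  simp [Complex.norm_exp]

private lemma iterAffine (R : ℕ) (hR : 0 < R) (b0 : ℤ) :
    ∀ n : ℕ, ∃ c : ℝ, ∀ x : ℝ,
      (fun x => (x + (b0 : ℝ)) / (R : ℝ))^[n] x = x / (R : ℝ) ^ n + c := by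
  have hR0 : (R : ℝ) ≠ 0 := by positivity
  intro n
  induction n with
  | zero => exact ⟨0, fun x => by simp⟩
  | succ n ih =>
    obtain ⟨c, hc⟩ := ih
    refine ⟨(c + (b0 : ℝ)) / (R : ℝ), fun x => ?_⟩
    rw [Function.iterate_succ_apply', hc]
    field_simp
    ring

set_option maxHeartbeats 1000000 in
/-- In dimension one, let `(R, B)` be an affine IFS (`R > 1` an integer, `B ⊂ ℤ` finite with
`#B = N`, maps `τ_b(x) = (x+b)/R`) with attractor `X`, invariant probability measure `μ_B`,
and no overlap.  If `ν` is a Bessel measure for `μ_B`, then `dim ν ≤ log N / log R`. -/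
theorem stmt18 (R : ℕ) (hR : 1 < R) (B : Finset ℤ) (hBne : B.Nonempty)
    (τ : ℤ → ℝ → ℝ) (hτ : ∀ b x, τ b x = (x + (b : ℝ)) / (R : ℝ))
    (X : Set ℝ) (hXc : IsCompact X) (hXne : X.Nonempty)
    (hX : X = ⋃ b ∈ B, τ b '' X)
    (μB : Measure ℝ) [IsProbabilityMeasure μB]
    (hinv : ∀ f : ℝ → ℝ, Continuous f → HasCompactSupport f →
      ∫ x, f x ∂μB = (1 / (B.card : ℝ)) * ∑ b ∈ B, ∫ x, f (τ b x) ∂μB)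
    (hsuppX : μB Xᶜ = 0)
    (hno : ∀ b ∈ B, ∀ b' ∈ B, b ≠ b' → μB (τ b '' X ∩ τ b' '' X) = 0)
    (ν : Measure ℝ) (hbes : ∃ B' > (0 : ℝ), IsBesselBound1 μB ν B') :
    beurlingDim1 ν ≤ ENNReal.ofReal (Real.log B.card / Real.log R) := by
  classical
  obtain ⟨B', hB'pos, hbess⟩ := hbes
  have hτ' : ∀ b, τ b = fun x : ℝ => (x + (b : ℝ)) / (R : ℝ) := fun b => funext (hτ b)
  simp only [hτ'] at hinv hno hX
  obtain ⟨b0, hb0⟩ := hBne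
  have hRR : (1 : ℝ) < R := by exact_mod_cast hR
  have hRpos : (0 : ℝ) < R := by linarith
  have hNpos : 0 < B.card := Finset.card_pos.2 ⟨b0, hb0⟩
  have hNR : (1 : ℝ) ≤ B.card := by exact_mod_cast hNpos
  set Nc : ℝ := (B.card : ℝ) with hNc
  have hXsub : ∀ b ∈ B, ∀ x ∈ X, (x + (b : ℝ)) / (R : ℝ) ∈ X := by
    intro b hb x hx
    have : (x + (b : ℝ)) / (R : ℝ) ∈ ⋃ b ∈ B, (fun x : ℝ => (x + (b : ℝ)) / (R : ℝ)) '' X :=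
      Set.mem_biUnion hb ⟨x, hx, rfl⟩
    rwa [← hX] at this
  have hmeq := measEq R hR B ⟨b0, hb0⟩ X hXc hXsub μB hinv hsuppX
  have hkey := keyTransfer R hR B X hXc hXsub μB hmeq hsuppX hno b0 hb0
  set T : ℝ → ℝ := fun x => (x + (b0 : ℝ)) / (R : ℝ) with hT
  have Tcont : Continuous T := by fun_prop
  have haeX : ∀ᵐ x ∂μB, x ∈ X := by
    rw [ae_iff]; simpa [Set.compl_def] using hsuppX
  have hScomp : ∀ n : ℕ, IsCompact (T^[n] '' X) := by
    intro n
    induction n with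
    | zero => simpa using hXc
    | succ n ih =>
      rw [Function.iterate_succ', Set.image_comp]
      exact ih.image Tcont
  have hSmeas : ∀ n : ℕ, MeasurableSet (T^[n] '' X) :=
    fun n => (hScomp n).isClosed.measurableSet
  -- measure of the small pieces
  have hμS : ∀ n : ℕ, μB (T^[n] '' X) = ENNReal.ofReal ((Nc⁻¹) ^ n) := by
    intro n
    have h1 := hkey n (fun _ => (1 : ℂ)) continuous_const (by simp)
    rw [integral_indicator_const (1 : ℂ) (hSmeas n)] at h1
    simp only [integral_const, measure_univ, ENNReal.toReal_one, probReal_univ, one_smul, smul_eq_mul,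
      mul_one, Complex.real_smul] at h1
    have h2 : (μB (T^[n] '' X)).toReal = (Nc⁻¹) ^ n := by
      have := h1
      rw [← measureReal_def]
      exact_mod_cast this
    rw [← h2, ENNReal.ofReal_toReal (measure_ne_top μB _)]
  -- exponential function machinery
  set E : ℝ → ℝ → ℂ := fun u x => Complex.exp (((-(2 * Real.pi * u * x) : ℝ) : ℂ) * Complex.I)
    with hE
  have hEnorm : ∀ u x : ℝ, ‖E u x‖ = 1 := fun u x => normExpI _
  have hEcont : ∀ u : ℝ, Continuous (E u) := by
    intro u
    apply Complex.continuous_exp.comp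
    fun_prop
  have hEmul : ∀ u v x : ℝ, E u x * E v x = E (u + v) x := by
    intro u v x
    rw [hE]
    simp only
    rw [← Complex.exp_add]
    congr 1
    push_cast
    ring
  have hEint : ∀ u : ℝ, Integrable (E u) μB :=
    fun u => (integrable_const (1 : ℝ)).mono' (hEcont u).aestronglyMeasurable
      (Filter.Eventually.of_forall fun x => le_of_eq (hEnorm u x))
  set chF : ℝ → ℂ := fun u => ∫ x, E u x ∂μB with hchF
  -- lower bound for chF near zero
  obtain ⟨M0, hM0⟩ := hXc.isBounded.subset_closedBall 0
  set M : ℝ := max M0 1 with hM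
  have hMpos : (0 : ℝ) < M := lt_of_lt_of_le one_pos (le_max_right _ _)
  have hMX : ∀ x ∈ X, |x| ≤ M := by
    intro x hx
    have := hM0 hx
    rw [Metric.mem_closedBall, Real.dist_eq, sub_zero] at this
    exact this.trans (le_max_left _ _)
  set h : ℝ := (8 * Real.pi * M)⁻¹ with hh
  have hhpos : 0 < h := by
    rw [hh]; positivity
  have hch : ∀ u : ℝ, |u| ≤ h → 1 / 2 ≤ ‖chF u‖ := by
    intro u hu
    have hsub : chF u - 1 = ∫ x, (E u x - 1) ∂μB := by
      rw [integral_sub (hEint u) (integrable_const 1), integral_const]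
      simp
      rfl
    have hbd : ‖chF u - 1‖ ≤ 1 / 2 := by
      rw [hsub]
      have := norm_integral_le_of_norm_le_const (μ := μB) (f := fun x => E u x - 1)
        (C := 1 / 2) ?_
      · simpa using this
      · refine haeX.mono fun x hx => ?_
        have habs : ‖(((-(2 * Real.pi * u * x) : ℝ) : ℂ) * Complex.I)‖ ≤ 1 / 4 := by
          rw [norm_mul, Complex.norm_I, mul_one, Complex.norm_real, Real.norm_eq_abs]
          have h1 : |(-(2 * Real.pi * u * x) : ℝ)| = 2 * Real.pi * |u| * |x| := by
            rw [abs_neg]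
            rw [abs_mul, abs_mul]
            have : |(2 : ℝ) * Real.pi| = 2 * Real.pi := abs_of_pos (by positivity)
            rw [this]
          rw [h1]
          have hxM := hMX x hx
          have hpi : (0:ℝ) < Real.pi := Real.pi_pos
          calc 2 * Real.pi * |u| * |x| ≤ 2 * Real.pi * h * M := by
                have h2 : |u| * |x| ≤ h * M :=
                  mul_le_mul hu hxM (abs_nonneg x) hhpos.le
                calc 2 * Real.pi * |u| * |x| = 2 * Real.pi * (|u| * |x|) := by ring
                  _ ≤ 2 * Real.pi * (h * M) := by
                      exact mul_le_mul_of_nonneg_left h2 (by positivity)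
                  _ = 2 * Real.pi * h * M := by ring
            _ = 1 / 4 := by
                rw [hh]
                field_simp
                ring
        have := Complex.norm_exp_sub_one_le (x := ((-(2 * Real.pi * u * x) : ℝ) : ℂ) * Complex.I)
          (le_trans habs (by norm_num))
        rw [hE]
        beta_reduce
        calc ‖Complex.exp (((-(2 * Real.pi * u * x) : ℝ) : ℂ) * Complex.I) - 1‖
            ≤ 2 * ‖(((-(2 * Real.pi * u * x) : ℝ) : ℂ) * Complex.I)‖ := this
          _ ≤ 2 * (1 / 4) := by linarith
          _ = 1 / 2 := by norm_num
    have h1 : (1 : ℝ) - ‖chF u‖ ≤ 1 / 2 := by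
      have h2 : ‖(1 : ℂ)‖ - ‖chF u‖ ≤ ‖(1 : ℂ) - chF u‖ := norm_sub_norm_le _ _
      rw [norm_one, norm_sub_rev] at h2
      linarith
    linarith
  -- the test functions and their Fourier transforms
  set fn : ℕ → ℝ → ℝ → ℂ := fun n s => (T^[n] '' X).indicator (E (-s)) with hfn
  have hfnmeas : ∀ n s, StronglyMeasurable (fn n s) :=
    fun n s => (hEcont (-s)).stronglyMeasurable.indicator (hSmeas n)
  have hfnbd : ∀ n s x, ‖fn n s x‖ ≤ 1 := by
    intro n s x
    exact le_trans (norm_indicator_le_norm_self _ x) (le_of_eq (hEnorm _ x))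
  have hfnmem : ∀ n s, MemLp (fn n s) 2 μB :=
    fun n s => MemLp.of_bound (hfnmeas n s).aestronglyMeasurable 1
      (Filter.Eventually.of_forall (hfnbd n s))
  obtain ⟨cc, hcc⟩ : ∃ cc : ℕ → ℝ, ∀ n x, T^[n] x = x / (R:ℝ)^n + cc n := by
    have := fun n => iterAffine R (by omega) b0 n
    exact ⟨fun n => (this n).choose, fun n => (this n).choose_spec⟩
  have hftm : ∀ (n : ℕ) (s t : ℝ),
      ‖ftm1 μB (fn n s) t‖ = (Nc⁻¹) ^ n * ‖chF ((t - s) / (R:ℝ)^n)‖ := by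
    intro n s t
    have e1 : ftm1 μB (fn n s) t = ∫ x, (T^[n] '' X).indicator (E (t - s)) x ∂μB := by
      rw [ftm1]
      refine integral_congr_ae (Filter.Eventually.of_forall fun x => ?_)
      have hexp : Complex.exp (-(2 * (Real.pi : ℂ) * (t:ℂ) * (x:ℂ)) * Complex.I) = E t x := by
        rw [hE]
        congr 1
        push_cast
        ring
      rw [hfn]
      simp only
      rw [hexp, ← Set.indicator_mul_left]
      congr 1
      funext y
      rw [hEmul]
      congr 1
      ring
    have e2 := hkey n (E (t - s)) (hEcont _) (fun x => le_of_eq (hEnorm _ x))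
    have e3 : ∫ x, E (t - s) (T^[n] x) ∂μB
        = E (t - s) (cc n) * chF ((t - s) / (R:ℝ)^n) := by
      rw [hchF]
      simp only
      rw [← integral_const_mul]
      refine integral_congr_ae (Filter.Eventually.of_forall fun x => ?_)
      show E (t - s) (T^[n] x) = E (t - s) (cc n) * E ((t - s) / (R:ℝ) ^ n) x
      rw [hcc n x, hE]
      simp only
      rw [← Complex.exp_add]
      congr 1
      push_cast
      have hRn : ((R:ℝ))^n ≠ 0 := by positivity
      field_simp
      ring
    rw [e1, e2, e3]
    rw [norm_mul, norm_mul, hEnorm, norm_pow]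
    have : ‖(((B.card : ℝ)⁻¹ : ℝ) : ℂ)‖ = Nc⁻¹ := by
      rw [Complex.norm_real, Real.norm_eq_abs, abs_of_pos]
      have : (0:ℝ) < B.card := by exact_mod_cast hNpos
      exact inv_pos.2 this
    rw [this]
    ring
  -- the main density estimate from the Bessel property
  have hν : ∀ (n : ℕ) (s : ℝ),
      ν (Set.Icc (s - h * (R:ℝ)^n) (s + h * (R:ℝ)^n))
        ≤ ENNReal.ofReal (4 * B' * Nc ^ n) := by
    intro n s
    set K : Set ℝ := Set.Icc (s - h * (R:ℝ)^n) (s + h * (R:ℝ)^n) with hK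
    set cn : ℝ := (Nc⁻¹) ^ n with hcn
    have hNc0 : (0:ℝ) < Nc := by rw [hNc]; exact_mod_cast hNpos
    have hcnpos : 0 < cn := by rw [hcn]; exact pow_pos (inv_pos.2 hNc0) n
    have hRnpos : (0:ℝ) < (R:ℝ)^n := by positivity
    -- lower bound on the transform on K
    have hlow : ∀ t ∈ K, cn / 2 ≤ ‖ftm1 μB (fn n s) t‖ := by
      intro t ht
      rw [hftm n s t]
      have habs : |(t - s) / (R:ℝ)^n| ≤ h := by
        rw [abs_div, abs_of_pos hRnpos, div_le_iff₀ hRnpos]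
        rw [hK, Set.mem_Icc] at ht
        rw [abs_le]
        constructor <;> linarith [ht.1, ht.2]
      have := hch _ habs
      calc cn / 2 = cn * (1 / 2) := by ring
        _ ≤ cn * ‖chF ((t - s) / (R:ℝ)^n)‖ :=
            mul_le_mul_of_nonneg_left this hcnpos.le
    have hlow2 : ENNReal.ofReal ((cn / 2) ^ 2) * ν K
        ≤ ∫⁻ t, (‖ftm1 μB (fn n s) t‖₊ : ℝ≥0∞) ^ 2 ∂ν := by
      calc ENNReal.ofReal ((cn / 2) ^ 2) * ν K
          = ∫⁻ _ in K, ENNReal.ofReal ((cn / 2) ^ 2) ∂ν := (setLIntegral_const K _).symm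
        _ ≤ ∫⁻ t in K, (‖ftm1 μB (fn n s) t‖₊ : ℝ≥0∞) ^ 2 ∂ν := by
            refine lintegral_mono_ae ((ae_restrict_iff' measurableSet_Icc).2
              (Filter.Eventually.of_forall fun t ht => ?_))
            calc ENNReal.ofReal ((cn / 2) ^ 2)
                ≤ ENNReal.ofReal (‖ftm1 μB (fn n s) t‖ ^ 2) := by
                  refine ENNReal.ofReal_le_ofReal ?_
                  have h1 := hlow t ht
                  have h2 : (0:ℝ) ≤ cn / 2 := by linarith
                  nlinarith [norm_nonneg (ftm1 μB (fn n s) t)]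
              _ = (‖ftm1 μB (fn n s) t‖₊ : ℝ≥0∞) ^ 2 := by
                  rw [ENNReal.ofReal_pow (norm_nonneg _), ofReal_norm, enorm_eq_nnnorm]
        _ ≤ ∫⁻ t, (‖ftm1 μB (fn n s) t‖₊ : ℝ≥0∞) ^ 2 ∂ν := setLIntegral_le_lintegral _ _
    -- upper bound from Bessel
    have hup : ∫⁻ t, (‖ftm1 μB (fn n s) t‖₊ : ℝ≥0∞) ^ 2 ∂ν
        ≤ ENNReal.ofReal (B' * cn) := by
      refine le_trans (hbess (fn n s) (hfnmem n s)) ?_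
      have h1 : ∫⁻ x, (‖fn n s x‖₊ : ℝ≥0∞) ^ 2 ∂μB ≤ μB (T^[n] '' X) := by
        have h2 : ∫⁻ x, (‖fn n s x‖₊ : ℝ≥0∞) ^ 2 ∂μB
            ≤ ∫⁻ x, (T^[n] '' X).indicator (fun _ => 1) x ∂μB := by
          refine lintegral_mono fun x => ?_
          by_cases hx : x ∈ T^[n] '' X
          · rw [Set.indicator_of_mem hx]
            rw [hfn]
            simp only
            rw [Set.indicator_of_mem hx]
            have : (‖E (-s) x‖₊ : ℝ≥0∞) = 1 := by
              rw [← enorm_eq_nnnorm, ← ofReal_norm, hEnorm, ENNReal.ofReal_one]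
            rw [this, one_pow]
          · rw [Set.indicator_of_notMem hx]
            rw [hfn]
            simp only
            rw [Set.indicator_of_notMem hx]
            simp
        rw [lintegral_indicator (hSmeas n)] at h2
        simpa using h2
      calc ENNReal.ofReal B' * ∫⁻ x, (‖fn n s x‖₊ : ℝ≥0∞) ^ 2 ∂μB
          ≤ ENNReal.ofReal B' * μB (T^[n] '' X) :=
            mul_le_mul_right h1 _
        _ = ENNReal.ofReal B' * ENNReal.ofReal cn := by rw [hμS n]
        _ = ENNReal.ofReal (B' * cn) := by
            rw [← ENNReal.ofReal_mul hB'pos.le]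
    -- combine
    have hc0 : ENNReal.ofReal ((cn / 2) ^ 2) ≠ 0 := by
      refine (ENNReal.ofReal_pos.2 (pow_pos (by linarith) 2)).ne'
    have hctop : ENNReal.ofReal ((cn / 2) ^ 2) ≠ ⊤ := ENNReal.ofReal_ne_top
    have hmain : ν K * ENNReal.ofReal ((cn / 2) ^ 2)
        ≤ ENNReal.ofReal (4 * B' * Nc ^ n) * ENNReal.ofReal ((cn / 2) ^ 2) := by
      rw [mul_comm (ν K)]
      refine le_trans (le_trans hlow2 hup) (le_of_eq ?_)
      rw [← ENNReal.ofReal_mul (mul_nonneg (by linarith) (pow_pos hNc0 n).le)]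
      congr 1
      have hNcn : Nc ^ n * cn = 1 := by
        rw [hcn, ← mul_pow, mul_inv_cancel₀ hNc0.ne', one_pow]
      rw [hcn] at hNcn ⊢
      linear_combination (-B' * Nc⁻¹ ^ n) * hNcn
    exact (ENNReal.mul_le_mul_iff_left hc0 hctop).1 hmain
  -- covering estimate for cubes
  have hcube : ∀ (n : ℕ) (x L : ℝ), L ≤ 2 * h * (R:ℝ)^n →
      ν (cube1 x L) ≤ ENNReal.ofReal (4 * B' * Nc ^ n) := by
    intro n x L hL
    refine le_trans (measure_mono ?_) (hν n (x + h * (R:ℝ)^n))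
    intro t ht
    rw [cube1, Set.mem_Ico] at ht
    rw [Set.mem_Icc]
    constructor
    · linarith [ht.1]
    · linarith [ht.2]
  set β : ℝ := Real.log Nc / Real.log R with hβ
  have hlogR : 0 < Real.log R := Real.log_pos hRR
  have hlogN : 0 ≤ Real.log Nc := Real.log_nonneg hNR
  have hNle : ∀ L : ℝ, 2 * h ≤ L → ∀ x : ℝ,
      ν (cube1 x L) ≤ ENNReal.ofReal (4 * B' * Nc * (L / (2*h)) ^ β) := by
    intro L hL x
    have h2h : (0:ℝ) < 2 * h := by positivity
    set q : ℝ := L / (2 * h) with hq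
    have hq1 : 1 ≤ q := (one_le_div h2h).2 hL
    have hq0 : 0 < q := lt_of_lt_of_le one_pos hq1
    set a : ℝ := Real.logb R q with ha
    have ha0 : 0 ≤ a := Real.logb_nonneg hRR hq1
    set n : ℕ := ⌈a⌉₊ with hn
    have hNc0 : (0:ℝ) < Nc := by rw [hNc]; exact_mod_cast hNpos
    have hRa : (R:ℝ) ^ (a:ℝ) = q := Real.rpow_logb hRpos (by linarith) hq0
    have hRn : q ≤ (R:ℝ)^n := by
      calc q = (R:ℝ) ^ (a:ℝ) := hRa.symm
        _ ≤ (R:ℝ) ^ ((n:ℕ):ℝ) := Real.rpow_le_rpow_of_exponent_le hRR.le (Nat.le_ceil a)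
        _ = (R:ℝ)^n := Real.rpow_natCast _ n
    have hLle : L ≤ 2 * h * (R:ℝ)^n := by
      have hLq : L = 2 * h * q := by rw [hq]; field_simp
      rw [hLq, mul_assoc, mul_assoc]
      have := mul_le_mul_of_nonneg_left hRn (hhpos.le)
      exact mul_le_mul_of_nonneg_left (this) (by norm_num)
    refine le_trans (hcube n x L hLle) (ENNReal.ofReal_le_ofReal ?_)
    have hNn : Nc ^ n ≤ Nc * q ^ β := by
      have h1 : (Nc:ℝ) ^ (a + 1 : ℝ) = Nc ^ (a:ℝ) * Nc := by
        rw [Real.rpow_add hNc0, Real.rpow_one]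
      have h3 : Nc ^ (a:ℝ) = q ^ β := by
        rw [Real.rpow_def_of_pos hNc0, Real.rpow_def_of_pos hq0]
        congr 1
        rw [ha, hβ, Real.logb]
        ring
      calc Nc ^ n = (Nc:ℝ) ^ ((n:ℕ):ℝ) := (Real.rpow_natCast _ n).symm
        _ ≤ Nc ^ (a + 1 : ℝ) :=
            Real.rpow_le_rpow_of_exponent_le hNR (le_of_lt (Nat.ceil_lt_add_one ha0))
        _ = q ^ β * Nc := by rw [h1, h3]
        _ = Nc * q ^ β := by ring
    calc 4 * B' * Nc ^ n = 4 * B' * (Nc ^ n) := by ring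
      _ ≤ 4 * B' * (Nc * q ^ β) :=
          mul_le_mul_of_nonneg_left hNn (by positivity)
      _ = 4 * B' * Nc * q ^ β := by ring
  -- conclude
  have hdim : ∀ α : ℝ, 0 ≤ α → beurlingDensity1 ν α = ⊤ → α ≤ β := by
    intro α hα0 hdens
    by_contra hcon
    push_neg at hcon
    set C : ℝ := 4 * B' * Nc with hC
    have hNc0 : (0:ℝ) < Nc := by rw [hNc]; exact_mod_cast hNpos
    have hCpos : 0 < C := by rw [hC]; exact mul_pos (by linarith) hNc0
    have h2h : (0:ℝ) < 2*h := by positivity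
    have hev : ∀ᶠ L in Filter.atTop, (⨆ x : ℝ, ν (cube1 x L) / ENNReal.ofReal (L ^ α))
        ≤ ENNReal.ofReal (C * (L / (2*h)) ^ β / L ^ α) := by
      filter_upwards [Filter.eventually_ge_atTop (max (2*h) 1)] with L hL
      have hL2h : 2*h ≤ L := le_trans (le_max_left _ _) hL
      have hL1 : (1:ℝ) ≤ L := le_trans (le_max_right _ _) hL
      have hL0 : (0:ℝ) < L := lt_of_lt_of_le one_pos hL1
      refine iSup_le fun x => ?_
      calc ν (cube1 x L) / ENNReal.ofReal (L ^ α)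
          ≤ ENNReal.ofReal (C * (L / (2*h)) ^ β) / ENNReal.ofReal (L ^ α) :=
            ENNReal.div_le_div_right (hNle L hL2h x) _
        _ = ENNReal.ofReal (C * (L / (2*h)) ^ β / L ^ α) :=
            (ENNReal.ofReal_div_of_pos (Real.rpow_pos_of_pos hL0 α)).symm
    have htend : Filter.Tendsto (fun L : ℝ => ENNReal.ofReal (C * (L / (2*h)) ^ β / L ^ α))
        Filter.atTop (nhds 0) := by
      have hreal : Filter.Tendsto (fun L : ℝ => C * (L / (2*h)) ^ β / L ^ α)
          Filter.atTop (nhds 0) := by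
        have heq : (fun L : ℝ => C / (2*h) ^ β * L ^ (β - α))
            =ᶠ[Filter.atTop] (fun L : ℝ => C * (L / (2*h)) ^ β / L ^ α) := by
          filter_upwards [Filter.eventually_gt_atTop 0] with L hL0
          rw [Real.div_rpow hL0.le h2h.le, Real.rpow_sub hL0]
          ring
        have h1 : Filter.Tendsto (fun L : ℝ => L ^ (β - α)) Filter.atTop (nhds 0) := by
          have hneg : β - α = -(α - β) := by ring
          rw [hneg]
          exact tendsto_rpow_neg_atTop (by linarith)
        have h2 := h1.const_mul (C / (2*h) ^ β)
        rw [mul_zero] at h2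
        exact Filter.Tendsto.congr' heq h2
      have := ENNReal.tendsto_ofReal (a := 0) hreal
      rwa [ENNReal.ofReal_zero] at this
    have hlim : beurlingDensity1 ν α ≤ 0 := by
      rw [beurlingDensity1]
      calc Filter.limsup (fun L : ℝ => ⨆ x : ℝ, ν (cube1 x L) / ENNReal.ofReal (L ^ α))
            Filter.atTop
          ≤ Filter.limsup (fun L : ℝ =>
              ENNReal.ofReal (C * (L / (2*h)) ^ β / L ^ α)) Filter.atTop :=
            Filter.limsup_le_limsup hev
        _ = 0 := htend.limsup_eq
    rw [hdens] at hlim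
    simp at hlim
  rw [beurlingDim1]
  exact iSup_le fun α => iSup_le fun hα0 => iSup_le fun hdens =>
    ENNReal.ofReal_le_ofReal (hdim α hα0 hdens)
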